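/- Let $\mu$ be a partition with $n$ parts and conjugate $\mu' = (c_\ell,\ldots,c_1)$, let $\lambda \supseteq \mu$ be a partition, and let $\mathbf{T} = (T_1,\ldots,T_\ell)$. Then there is a bijection between maximal multiset tableaux of shape $\mu$ with weight $\lambda$ and column weight $\mathbf{T}$, and restricted tableaux of shape $\lambda/\mu$ with weight $\mathbf{T}$. -/

import Mathlib

open Finset MvPolynomial

/-- Height of the column with label `j` (columns are labeled `ℓ, ℓ-1, …, 1` from
left to right, so the column labeled `j` is the one in 0-indexed position `ℓ - j`):
the number of rows `i` with `μ i > ℓ - j`. -/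
def colHt (n : ℕ) (μ : Fin n → ℕ) (ℓ j : ℕ) : ℕ :=
  (Finset.univ.filter fun i : Fin n => ℓ - j < μ i).card

/-- A multiset tableau of shape `μ` (a partition with `n` parts, all parts `≤ ℓ`).
`box i j` is the content of the box in row `i` (0-indexed) and the column
labeled `j` (labels `ℓ, …, 1` from left to right); boxes outside the diagram are
empty.  Entries are positive integers; the maximum of each box is strictly less
than the minimum of the box below it and weakly less than the minimum of the box
to its right (the box to the right of column label `j+1` is column label `j`). -/
structure MTab (n ℓ : ℕ) (μ : Fin n → ℕ) where
  box : Fin n → ℕ → Multiset ℕ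
  pos : ∀ i j, ∀ a ∈ box i j, 1 ≤ a
  supp : ∀ i j, box i j ≠ 0 ↔ (1 ≤ j ∧ j ≤ ℓ ∧ ℓ - j < μ i)
  right : ∀ (i : Fin n) (j : ℕ), ∀ a ∈ box i (j + 1), ∀ z ∈ box i j, a ≤ z
  below : ∀ (i i' : Fin n) (j : ℕ), (i : ℕ) + 1 = (i' : ℕ) →
    ∀ a ∈ box i j, ∀ z ∈ box i' j, a < z

/-- The weight of a multiset tableau: the number of entries equal to `v`. -/
def MTab.wt {n ℓ : ℕ} {μ : Fin n → ℕ} (P : MTab n ℓ μ) (v : ℕ) : ℕ :=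
  ∑ i : Fin n, ∑ j ∈ Finset.Icc 1 ℓ, (P.box i j).count v

/-- The column weight of a multiset tableau at column label `j`: the number of
entries in column `j` minus the height of column `j`. -/
def MTab.cw {n ℓ : ℕ} {μ : Fin n → ℕ} (P : MTab n ℓ μ) (j : ℕ) : ℕ :=
  (∑ i : Fin n, (P.box i j).card) - colHt n μ ℓ j

/-- The maximality conditions for a multiset tableau: box `b_{ij}` (row `i`,
0-indexed, column label `j`) contains only entries equal to `i + 1` (the paper's
1-indexed row number), and for all adjacent rows `i, i+1` and all `k ≥ 0`,
`∑_{1 ≤ j ≤ k} (|b_{(i+1)j}| - |b_{i(j-1)}|) ≤ 1`. -/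
def MTab.IsMax {n ℓ : ℕ} {μ : Fin n → ℕ} (P : MTab n ℓ μ) : Prop :=
  (∀ (i : Fin n) (j : ℕ), ∀ a ∈ P.box i j, a = (i : ℕ) + 1) ∧
  (∀ (i i' : Fin n), (i : ℕ) + 1 = (i' : ℕ) → ∀ k : ℕ,
    (∑ j ∈ Finset.Icc 1 k, (((P.box i' j).card : ℤ) - ((P.box i (j - 1)).card : ℤ))) ≤ 1)

/-- A restricted tableau of skew shape `λ/μ`: a semistandard filling (0-indexed
columns from the left this time, value `0` marking empty cells) with values in
`{1, …, ℓ}`, weakly increasing along rows, strictly increasing down columns, and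
such that every entry `v` occurs on or above row `c_v` (1-indexed), where
`c_v = colHt n μ ℓ v` is the height of column `v` of `μ`. -/
structure RTab (n ℓ : ℕ) (μ lam : Fin n → ℕ) where
  entry : Fin n → ℕ → ℕ
  supp : ∀ i j, entry i j ≠ 0 ↔ (μ i ≤ j ∧ j < lam i)
  le_alpha : ∀ i j, entry i j ≤ ℓ
  row : ∀ (i : Fin n) (j j' : ℕ), j ≤ j' → entry i j ≠ 0 → entry i j' ≠ 0 →
    entry i j ≤ entry i j'
  col : ∀ (i i' : Fin n) (j : ℕ), i < i' → entry i j ≠ 0 → entry i' j ≠ 0 →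
    entry i j < entry i' j
  restrict : ∀ i j, entry i j ≠ 0 → (i : ℕ) < colHt n μ ℓ (entry i j)

/-- The weight of a restricted tableau: the number of entries equal to `v ≥ 1`. -/
def RTab.wt {n ℓ : ℕ} {μ lam : Fin n → ℕ} (R : RTab n ℓ μ lam) (v : ℕ) : ℕ :=
  ∑ i : Fin n, ((Finset.range (lam i)).filter fun j => R.entry i j = v).card

/-- A semistandard Young tableau of shape `λ` with positive integer entries
(0-indexed columns, value `0` marking empty cells). -/
structure SSYTab (n : ℕ) (lam : Fin n → ℕ) where
  entry : Fin n → ℕ → ℕ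
  supp : ∀ i j, entry i j ≠ 0 ↔ j < lam i
  row : ∀ (i : Fin n) (j j' : ℕ), j ≤ j' → entry i j ≠ 0 → entry i j' ≠ 0 →
    entry i j ≤ entry i j'
  col : ∀ (i i' : Fin n) (j : ℕ), i < i' → entry i j ≠ 0 → entry i' j ≠ 0 →
    entry i j < entry i' j

/-- The weight of a semistandard Young tableau. -/
def SSYTab.wt {n : ℕ} {lam : Fin n → ℕ} (Q : SSYTab n lam) (v : ℕ) : ℕ :=
  ∑ i : Fin n, ((Finset.range (lam i)).filter fun j => Q.entry i j = v).card

namespace Stmt7Aux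
open Finset
open Finset

/-- The common combinatorial profile underlying both kinds of tableaux. -/
structure Prof (n ℓ : ℕ) (μ lam : Fin n → ℕ) where
  g : Fin n → ℕ → ℕ
  gsupp : ∀ i v, g i v ≠ 0 → ℓ - μ i < v ∧ v ≤ ℓ
  total : ∀ i, μ i + ∑ v ∈ Icc 1 ℓ, g i v = lam i
  cs : ∀ (i i' : Fin n), (i : ℕ) + 1 = (i' : ℕ) → ∀ k, 1 ≤ k → k ≤ ℓ →
      μ i' + ∑ v ∈ Icc 1 k, g i' v ≤ μ i + ∑ v ∈ Icc 1 (k - 1), g i v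

theorem Prof.ext' {n ℓ : ℕ} {μ lam : Fin n → ℕ} {p q : Prof n ℓ μ lam}
    (h : p.g = q.g) : p = q := by
  cases p; cases q; cases h; rfl

theorem MTab.ext' {n ℓ : ℕ} {μ : Fin n → ℕ} {P Q : MTab n ℓ μ}
    (h : P.box = Q.box) : P = Q := by
  cases P; cases Q; cases h; rfl

theorem RTab.ext' {n ℓ : ℕ} {μ lam : Fin n → ℕ} {R S : RTab n ℓ μ lam}
    (h : R.entry = S.entry) : R = S := by
  cases R; cases S; cases h; rfl

theorem sum_pred (f : ℕ → ℕ) (hf : f 0 = 0) (k : ℕ) :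
    ∑ j ∈ Icc 1 k, f (j - 1) = ∑ j ∈ Icc 1 (k - 1), f j := by
  induction k with
  | zero => simp
  | succ k ih =>
    rw [Finset.sum_Icc_succ_top (by omega), ih, Nat.add_sub_cancel]
    cases k with
    | zero => simpa using hf
    | succ m => rw [Finset.sum_Icc_succ_top (by omega), Nat.succ_sub_one]

theorem S_mono (f : ℕ → ℕ) {v v' : ℕ} (h : v ≤ v') :
    ∑ j ∈ Icc 1 v, f j ≤ ∑ j ∈ Icc 1 v', f j :=
  Finset.sum_le_sum_of_subset (Finset.Icc_subset_Icc_right h)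

theorem S_succ (f : ℕ → ℕ) {v : ℕ} (hv : 1 ≤ v) :
    ∑ j ∈ Icc 1 v, f j = (∑ j ∈ Icc 1 (v - 1), f j) + f v := by
  obtain ⟨w, rfl⟩ : ∃ w, v = w + 1 := ⟨v - 1, by omega⟩
  rw [Finset.sum_Icc_succ_top (by omega), Nat.add_sub_cancel]

theorem lt_colHt_iff {n ℓ : ℕ} {μ : Fin n → ℕ}
    (hμ : ∀ i j : Fin n, i ≤ j → μ j ≤ μ i) (i : Fin n) (j : ℕ) :
    (i : ℕ) < colHt n μ ℓ j ↔ ℓ - j < μ i := by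
  unfold colHt
  constructor
  · intro h
    by_contra hc
    push_neg at hc
    have hsub : (Finset.univ.filter fun r : Fin n => ℓ - j < μ r) ⊆ Finset.Iio i := by
      intro r hr
      simp only [Finset.mem_filter, Finset.mem_univ, true_and] at hr
      rw [Finset.mem_Iio]
      by_contra hri
      push_neg at hri
      exact absurd (lt_of_lt_of_le hr (hμ i r hri)) (not_lt.2 hc)
    have := Finset.card_le_card hsub
    rw [Fin.card_Iio] at this
    omega
  · intro h
    have hsub : Finset.Iic i ⊆ Finset.univ.filter fun r : Fin n => ℓ - j < μ r := by
      intro r hr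
      rw [Finset.mem_Iic] at hr
      simp only [Finset.mem_filter, Finset.mem_univ, true_and]
      exact lt_of_lt_of_le h (hμ r i hr)
    have := Finset.card_le_card hsub
    rw [Fin.card_Iic] at this
    omega

theorem downset_eq {a b : ℕ} {A : Finset ℕ} (hA : A ⊆ Ico a b)
    (hdown : ∀ c ∈ A, ∀ c', a ≤ c' → c' ≤ c → c' ∈ A) :
    A = Ico a (a + A.card) := by
  by_cases hcard : ∀ x ∈ Ico a (a + A.card), x ∈ A
  · refine (Finset.eq_of_subset_of_card_le hcard ?_).symm
    rw [Nat.card_Ico]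
    omega
  · push_neg at hcard
    obtain ⟨x, hx, hxA⟩ := hcard
    rw [Finset.mem_Ico] at hx
    have hsub : A ⊆ Ico a x := by
      intro c hc
      rw [Finset.mem_Ico]
      refine ⟨(Finset.mem_Ico.mp (hA hc)).1, ?_⟩
      by_contra hcx
      push_neg at hcx
      exact hxA (hdown c hc x hx.1 hcx)
    have := Finset.card_le_card hsub
    rw [Nat.card_Ico] at this
    omega

/-- The box sizes of the (maximal) multiset tableau associated with a profile. -/
def MM (ℓ : ℕ) {n : ℕ} (μ : Fin n → ℕ) (g : Fin n → ℕ → ℕ) (i : Fin n) (j : ℕ) : ℕ :=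
  if 1 ≤ j ∧ j ≤ ℓ ∧ ℓ - j < μ i then g i j + 1 else 0

theorem sumM {n ℓ : ℕ} {μ : Fin n → ℕ} {g : Fin n → ℕ → ℕ} {i : Fin n}
    (hμi : μ i ≤ ℓ) (hg : ∀ v, g i v ≠ 0 → ℓ - μ i < v ∧ v ≤ ℓ)
    (k : ℕ) (hk : k ≤ ℓ) :
    ∑ j ∈ Icc 1 k, MM ℓ μ g i j = (∑ j ∈ Icc 1 k, g i j) + (k - min k (ℓ - μ i)) := by
  induction k with
  | zero => simp
  | succ k ih =>
    rw [Finset.sum_Icc_succ_top (by omega), Finset.sum_Icc_succ_top (by omega),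
      ih (by omega)]
    by_cases hc : ℓ - μ i < k + 1
    · have hMM : MM ℓ μ g i (k + 1) = g i (k + 1) + 1 :=
        if_pos ⟨by omega, by omega, by omega⟩
      rw [hMM]
      omega
    · have h0 : g i (k + 1) = 0 := by
        by_contra h
        exact hc (by have := hg _ h; omega)
      have hMM : MM ℓ μ g i (k + 1) = 0 := by
        apply if_neg
        push_neg
        intro _ _
        omega
      rw [hMM, h0]
      omega

theorem sumM_all {n ℓ : ℕ} {μ : Fin n → ℕ} {g : Fin n → ℕ → ℕ} {i : Fin n}
    (hμi : μ i ≤ ℓ) (hg : ∀ v, g i v ≠ 0 → ℓ - μ i < v ∧ v ≤ ℓ) :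
    ∑ j ∈ Icc 1 ℓ, MM ℓ μ g i j = (∑ j ∈ Icc 1 ℓ, g i j) + μ i := by
  rw [sumM hμi hg ℓ le_rfl]
  omega

theorem sumM_of_le {n ℓ : ℕ} {μ : Fin n → ℕ} {g : Fin n → ℕ → ℕ} {i : Fin n}
    {k : ℕ} (hk : ℓ ≤ k) :
    ∑ j ∈ Icc 1 k, MM ℓ μ g i j = ∑ j ∈ Icc 1 ℓ, MM ℓ μ g i j := by
  refine (Finset.sum_subset (Finset.Icc_subset_Icc_right hk) ?_).symm
  intro x hx hnx
  rw [Finset.mem_Icc] at hx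
  rw [Finset.mem_Icc] at hnx
  exact if_neg (by push_neg; intro _ h2; omega)

theorem sumM_col {n ℓ : ℕ} {μ : Fin n → ℕ} {g : Fin n → ℕ → ℕ}
    (hg : ∀ (i : Fin n) v, g i v ≠ 0 → ℓ - μ i < v ∧ v ≤ ℓ)
    {j : ℕ} (hj1 : 1 ≤ j) (hjl : j ≤ ℓ) :
    ∑ i : Fin n, MM ℓ μ g i j = (∑ i : Fin n, g i j) + colHt n μ ℓ j := by
  rw [colHt, Finset.card_filter, ← Finset.sum_add_distrib]
  refine Finset.sum_congr rfl fun i _ => ?_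
  by_cases hc : ℓ - j < μ i
  · rw [MM, if_pos ⟨hj1, hjl, hc⟩, if_pos hc]
  · have h0 : g i j = 0 := by
      by_contra h
      have := hg i j h
      omega
    rw [MM, if_neg (fun h => hc h.2.2), if_neg hc, h0]

open Finset

theorem MM_zero {n ℓ : ℕ} {μ : Fin n → ℕ} {g : Fin n → ℕ → ℕ} (i : Fin n) :
    MM ℓ μ g i 0 = 0 := by
  rw [MM, if_neg]
  push_neg
  intro h
  omega

/-- condition (2) of maximality, from the column-strictness inequality. -/
theorem max2_of_cs {n ℓ : ℕ} {μ lam : Fin n → ℕ}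
    (hμ : ∀ i j : Fin n, i ≤ j → μ j ≤ μ i)
    (hμl : ∀ i, μ i ≤ ℓ)
    (hlam : ∀ i j : Fin n, i ≤ j → lam j ≤ lam i)
    (p : Prof n ℓ μ lam) (i i' : Fin n) (hadj : (i : ℕ) + 1 = (i' : ℕ)) (k : ℕ) :
    (∑ j ∈ Icc 1 k, ((MM ℓ μ p.g i' j : ℤ) - (MM ℓ μ p.g i (j - 1) : ℤ))) ≤ 1 := by
  have hle : i ≤ i' := by rw [Fin.le_def]; omega
  have hμ' : μ i' ≤ μ i := hμ i i' hle
  have hμi : μ i ≤ ℓ := hμl i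
  have hμi' : μ i' ≤ ℓ := hμl i'
  rw [Finset.sum_sub_distrib, ← Nat.cast_sum, ← Nat.cast_sum,
    sum_pred (fun t => MM ℓ μ p.g i t) (MM_zero i) k]
  rcases le_or_gt k ℓ with hk | hk
  · rw [sumM hμi' (p.gsupp i') k hk, sumM hμi (p.gsupp i) (k - 1) (by omega)]
    by_cases hka : k ≤ ℓ - μ i'
    · have hS0 : ∑ j ∈ Icc 1 k, p.g i' j = 0 :=
        Finset.sum_eq_zero fun v hv => by
          by_contra h
          have := p.gsupp i' v h
          rw [Finset.mem_Icc] at hv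
          omega
      rw [hS0]
      omega
    · push_neg at hka
      have hk1 : 1 ≤ k := by omega
      have hcs := p.cs i i' hadj k hk1 hk
      omega
  · rw [sumM_of_le (by omega : ℓ ≤ k), sumM_of_le (by omega : ℓ ≤ k - 1),
      sumM_all hμi' (p.gsupp i'), sumM_all hμi (p.gsupp i)]
    have h1 := p.total i
    have h2 := p.total i'
    have hll : lam i' ≤ lam i := hlam i i' hle
    omega

/-- column strictness inequality from condition (2) of maximality. -/
theorem cs_of_max2 {n ℓ : ℕ} {μ : Fin n → ℕ}
    (hμ : ∀ i j : Fin n, i ≤ j → μ j ≤ μ i)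
    (hμl : ∀ i, μ i ≤ ℓ)
    {g : Fin n → ℕ → ℕ}
    (hg : ∀ (i : Fin n) v, g i v ≠ 0 → ℓ - μ i < v ∧ v ≤ ℓ)
    (i i' : Fin n) (hadj : (i : ℕ) + 1 = (i' : ℕ))
    (hmax : (∑ j ∈ Icc 1 k, ((MM ℓ μ g i' j : ℤ) - (MM ℓ μ g i (j - 1) : ℤ))) ≤ 1)
    (hk1 : 1 ≤ k) (hk : k ≤ ℓ) :
    μ i' + ∑ v ∈ Icc 1 k, g i' v ≤ μ i + ∑ v ∈ Icc 1 (k - 1), g i v := by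
  have hle : i ≤ i' := by rw [Fin.le_def]; omega
  have hμ' : μ i' ≤ μ i := hμ i i' hle
  have hμi : μ i ≤ ℓ := hμl i
  have hμi' : μ i' ≤ ℓ := hμl i'
  rw [Finset.sum_sub_distrib, ← Nat.cast_sum, ← Nat.cast_sum,
    sum_pred (fun t => MM ℓ μ g i t) (MM_zero i) k,
    sumM hμi' (hg i') k hk, sumM hμi (hg i) (k - 1) (by omega)] at hmax
  by_cases hka : k ≤ ℓ - μ i'
  · have hS0 : ∑ j ∈ Icc 1 k, g i' j = 0 :=
      Finset.sum_eq_zero fun v hv => by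
        by_contra h
        have := hg i' v h
        rw [Finset.mem_Icc] at hv
        omega
    rw [hS0]
    omega
  · push_neg at hka
    omega
open Finset

/-- The box-size profile extracted from a multiset tableau. -/
def gOf {n ℓ : ℕ} {μ : Fin n → ℕ} (P : MTab n ℓ μ) (i : Fin n) (j : ℕ) : ℕ :=
  (P.box i j).card - 1

theorem card_eq_MM {n ℓ : ℕ} {μ : Fin n → ℕ} (P : MTab n ℓ μ) (i : Fin n) (j : ℕ) :
    (P.box i j).card = MM ℓ μ (gOf P) i j := by
  by_cases hc : 1 ≤ j ∧ j ≤ ℓ ∧ ℓ - j < μ i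
  · have hb : P.box i j ≠ 0 := (P.supp i j).mpr hc
    have hcard : (P.box i j).card ≠ 0 := by rwa [Ne, Multiset.card_eq_zero]
    rw [MM, if_pos hc, gOf]
    omega
  · have hb : P.box i j = 0 := by
      by_contra h
      exact hc ((P.supp i j).mp h)
    rw [MM, if_neg hc, hb]
    simp

theorem gOf_supp {n ℓ : ℕ} {μ : Fin n → ℕ} (P : MTab n ℓ μ) (i : Fin n) (v : ℕ)
    (h : gOf P i v ≠ 0) : ℓ - μ i < v ∧ v ≤ ℓ := by
  have hb : P.box i v ≠ 0 := by
    intro h0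
    rw [gOf, h0] at h
    simp at h
  have hc := (P.supp i v).mp hb
  omega

theorem wt_eq_card {n ℓ : ℕ} {μ : Fin n → ℕ} (P : MTab n ℓ μ)
    (hmax1 : ∀ (i : Fin n) (j : ℕ), ∀ a ∈ P.box i j, a = (i : ℕ) + 1) (i : Fin n) :
    P.wt ((i : ℕ) + 1) = ∑ j ∈ Icc 1 ℓ, (P.box i j).card := by
  rw [MTab.wt]
  rw [Finset.sum_eq_single_of_mem i (Finset.mem_univ i)]
  · exact Finset.sum_congr rfl fun j _ =>
      Multiset.count_eq_card.mpr fun b hb => (hmax1 i j b hb).symm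
  · intro i'' _ hne
    refine Finset.sum_eq_zero fun j _ => ?_
    rw [Multiset.count_eq_zero]
    intro hmem
    have := hmax1 i'' j _ hmem
    exact hne (Fin.ext (by omega))

/-- The multiset tableau associated with a profile. -/
def profToMTab {n ℓ : ℕ} {μ lam : Fin n → ℕ} (p : Prof n ℓ μ lam) : MTab n ℓ μ where
  box i j := Multiset.replicate (MM ℓ μ p.g i j) ((i : ℕ) + 1)
  pos i j a ha := by
    have := Multiset.eq_of_mem_replicate ha
    omega
  supp i j := by
    rw [Ne, ← Multiset.card_eq_zero, Multiset.card_replicate]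
    by_cases hc : 1 ≤ j ∧ j ≤ ℓ ∧ ℓ - j < μ i
    · simp [MM, hc]
    · simp [MM, hc]
  right i j a ha z hz := by
    rw [Multiset.eq_of_mem_replicate ha, Multiset.eq_of_mem_replicate hz]
  below i i' j hadj a ha z hz := by
    rw [Multiset.eq_of_mem_replicate ha, Multiset.eq_of_mem_replicate hz]
    omega

theorem profToMTab_card {n ℓ : ℕ} {μ lam : Fin n → ℕ} (p : Prof n ℓ μ lam)
    (i : Fin n) (j : ℕ) : ((profToMTab p).box i j).card = MM ℓ μ p.g i j :=
  Multiset.card_replicate _ _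

theorem sideP {n ℓ : ℕ} (hn : 0 < n) (μ lam : Fin n → ℕ)
    (hμ : ∀ i j : Fin n, i ≤ j → μ j ≤ μ i) (hl : ℓ = μ ⟨0, hn⟩)
    (hlam : ∀ i j : Fin n, i ≤ j → lam j ≤ lam i) (hsub : ∀ i, μ i ≤ lam i)
    (T : ℕ → ℕ) :
    Nonempty
      ({P : MTab n ℓ μ // P.IsMax ∧ (∀ i : Fin n, P.wt ((i : ℕ) + 1) = lam i) ∧
          (∀ j, 1 ≤ j → j ≤ ℓ → P.cw j = T j)} ≃
        {p : Prof n ℓ μ lam // ∀ v, 1 ≤ v → v ≤ ℓ → (∑ i : Fin n, p.g i v) = T v}) := by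
  have hμl : ∀ i : Fin n, μ i ≤ ℓ := by
    intro i
    rw [hl]
    exact hμ ⟨0, hn⟩ i (by rw [Fin.le_def]; simp)
  constructor
  refine
    { toFun := fun X => ?_
      invFun := fun Y => ?_
      left_inv := ?_
      right_inv := ?_ }
  · -- forward: MTab to Prof
    obtain ⟨P, hmax, hwt, hcw⟩ := X
    refine ⟨⟨gOf P, gOf_supp P, ?_, ?_⟩, ?_⟩
    · -- total
      intro i
      have h1 := hwt i
      rw [wt_eq_card P hmax.1 i] at h1
      have h2 : ∑ j ∈ Icc 1 ℓ, (P.box i j).card = ∑ j ∈ Icc 1 ℓ, MM ℓ μ (gOf P) i j :=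
        Finset.sum_congr rfl fun j _ => card_eq_MM P i j
      rw [h2, sumM_all (hμl i) (gOf_supp P i)] at h1
      omega
    · -- cs
      intro i i' hadj k hk1 hk
      have hmax2 := hmax.2 i i' hadj k
      have hrw : ∀ t, ((P.box i' t).card : ℤ) - ((P.box i (t-1)).card : ℤ) =
          ((MM ℓ μ (gOf P) i' t : ℤ) - (MM ℓ μ (gOf P) i (t-1) : ℤ)) := fun t => by
        rw [card_eq_MM P i' t, card_eq_MM P i (t-1)]
      rw [Finset.sum_congr rfl fun t _ => hrw t] at hmax2
      exact cs_of_max2 hμ hμl (gOf_supp P) i i' hadj hmax2 hk1 hk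
    · -- column weights
      intro v hv1 hvl
      show ∑ i : Fin n, gOf P i v = T v
      have h1 := hcw v hv1 hvl
      rw [MTab.cw] at h1
      have h2 : ∑ i : Fin n, (P.box i v).card = ∑ i : Fin n, MM ℓ μ (gOf P) i v :=
        Finset.sum_congr rfl fun i _ => card_eq_MM P i v
      rw [h2, sumM_col (gOf_supp P) hv1 hvl] at h1
      omega
  · -- backward: Prof to MTab
    obtain ⟨p, hT⟩ := Y
    have hmax1 : ∀ (i : Fin n) (j : ℕ), ∀ a ∈ (profToMTab p).box i j, a = (i : ℕ) + 1 :=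
      fun i j a ha => Multiset.eq_of_mem_replicate ha
    refine ⟨profToMTab p, ⟨hmax1, ?_⟩, ?_, ?_⟩
    · -- IsMax (2)
      intro i i' hadj k
      have hrw : ∀ t, (((profToMTab p).box i' t).card : ℤ) -
          (((profToMTab p).box i (t-1)).card : ℤ) =
          ((MM ℓ μ p.g i' t : ℤ) - (MM ℓ μ p.g i (t-1) : ℤ)) := fun t => by
        rw [profToMTab_card, profToMTab_card]
      rw [Finset.sum_congr rfl fun t _ => hrw t]
      exact max2_of_cs hμ hμl hlam p i i' hadj k
    · -- weight
      intro i
      rw [wt_eq_card _ hmax1 i]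
      have h2 : ∑ j ∈ Icc 1 ℓ, ((profToMTab p).box i j).card =
          ∑ j ∈ Icc 1 ℓ, MM ℓ μ p.g i j :=
        Finset.sum_congr rfl fun j _ => profToMTab_card p i j
      rw [h2, sumM_all (hμl i) (p.gsupp i)]
      have := p.total i
      omega
    · -- column weight
      intro v hv1 hvl
      rw [MTab.cw]
      have h2 : ∑ i : Fin n, ((profToMTab p).box i v).card =
          ∑ i : Fin n, MM ℓ μ p.g i v :=
        Finset.sum_congr rfl fun i _ => profToMTab_card p i v
      rw [h2, sumM_col (p.gsupp) hv1 hvl]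
      rw [hT v hv1 hvl]
      omega
  · -- left inverse
    rintro ⟨P, hmax, hwt, hcw⟩
    apply Subtype.ext
    apply MTab.ext'
    funext i j
    show Multiset.replicate (MM ℓ μ (gOf P) i j) ((i : ℕ) + 1) = P.box i j
    rw [← card_eq_MM P i j]
    exact (Multiset.eq_replicate_card.mpr fun b hb => hmax.1 i j b hb).symm
  · -- right inverse
    rintro ⟨p, hT⟩
    apply Subtype.ext
    apply Prof.ext'
    funext i j
    show gOf (profToMTab p) i j = p.g i j
    rw [gOf, profToMTab_card]
    by_cases hc : 1 ≤ j ∧ j ≤ ℓ ∧ ℓ - j < μ i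
    · rw [MM, if_pos hc]
      omega
    · rw [MM, if_neg hc]
      have h0 : p.g i j = 0 := by
        by_contra h
        have := p.gsupp i j h
        have := hμl i
        exact hc ⟨by omega, by omega, by omega⟩
      omega

/-- The entry function of the restricted tableau associated with a profile. -/
def EE (ℓ : ℕ) {n : ℕ} (μ lam : Fin n → ℕ) (g : Fin n → ℕ → ℕ) (i : Fin n) (c : ℕ) : ℕ :=
  if μ i ≤ c ∧ c < lam i then
    1 + ((Icc 1 ℓ).filter fun v => μ i + ∑ w ∈ Icc 1 v, g i w ≤ c).card
  else 0

theorem EE_self {n ℓ : ℕ} {μ lam : Fin n → ℕ} {g : Fin n → ℕ → ℕ} (i : Fin n)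
    (htot : μ i + ∑ w ∈ Icc 1 ℓ, g i w = lam i)
    {c : ℕ} (hc1 : μ i ≤ c) (hc2 : c < lam i) :
    1 ≤ EE ℓ μ lam g i c ∧ EE ℓ μ lam g i c ≤ ℓ ∧
      μ i + ∑ w ∈ Icc 1 (EE ℓ μ lam g i c - 1), g i w ≤ c ∧
      c < μ i + ∑ w ∈ Icc 1 (EE ℓ μ lam g i c), g i w := by
  set D := (Icc 1 ℓ).filter (fun v => μ i + ∑ w ∈ Icc 1 v, g i w ≤ c) with hD
  have hDsub : D ⊆ Ico 1 (ℓ + 1) := by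
    intro x hx
    rw [Finset.mem_Ico]
    have := Finset.mem_Icc.mp (Finset.mem_filter.mp hx).1
    omega
  have hdown : ∀ x ∈ D, ∀ y, 1 ≤ y → y ≤ x → y ∈ D := by
    intro x hx y h1 h2
    obtain ⟨hxm, hxc⟩ := Finset.mem_filter.mp hx
    rw [Finset.mem_Icc] at hxm
    refine Finset.mem_filter.mpr ⟨Finset.mem_Icc.mpr ⟨h1, by omega⟩, ?_⟩
    have := S_mono (g i) h2
    omega
  have hDeq : D = Ico 1 (1 + D.card) := downset_eq hDsub hdown
  have hmem : ∀ w, w ∈ D ↔ 1 ≤ w ∧ w < 1 + D.card := by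
    intro w
    conv_lhs => rw [hDeq]
    rw [Finset.mem_Ico]
  have hlD : ℓ ∉ D := by
    intro h
    have := (Finset.mem_filter.mp h).2
    omega
  have hdl : D.card < ℓ := by
    have hdle : D.card ≤ ℓ := by
      have := Finset.card_le_card (Finset.filter_subset
        (fun v => μ i + ∑ w ∈ Icc 1 v, g i w ≤ c) (Icc 1 ℓ))
      rw [Nat.card_Icc] at this
      rw [hD]
      omega
    rcases Nat.lt_or_ge D.card ℓ with h | h
    · exact h
    · exfalso
      have hdeq : D.card = ℓ := le_antisymm hdle h
      rcases Nat.eq_zero_or_pos ℓ with hz | hpos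
      · rw [hz] at htot
        simp at htot
        omega
      · exact hlD ((hmem ℓ).mpr ⟨hpos, by omega⟩)
  have hEE : EE ℓ μ lam g i c = D.card + 1 := by
    unfold EE
    rw [if_pos ⟨hc1, hc2⟩, hD]
    omega
  refine ⟨by omega, by omega, ?_, ?_⟩
  · rw [hEE, Nat.add_sub_cancel]
    rcases Nat.eq_zero_or_pos D.card with h0 | hpos
    · rw [h0]
      simpa using hc1
    · have hmm : D.card ∈ D := (hmem _).mpr ⟨hpos, by omega⟩
      exact (Finset.mem_filter.mp hmm).2
  · rw [hEE]
    have hnot : D.card + 1 ∉ D := by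
      intro h
      have := (hmem _).mp h
      omega
    by_contra hcon
    push_neg at hcon
    exact hnot (Finset.mem_filter.mpr ⟨Finset.mem_Icc.mpr ⟨by omega, by omega⟩, hcon⟩)

theorem EE_eq_iff {n ℓ : ℕ} {μ lam : Fin n → ℕ} {g : Fin n → ℕ → ℕ} (i : Fin n)
    (htot : μ i + ∑ w ∈ Icc 1 ℓ, g i w = lam i)
    {c : ℕ} (hc1 : μ i ≤ c) (hc2 : c < lam i) (v : ℕ) (hv1 : 1 ≤ v) (hvl : v ≤ ℓ) :
    EE ℓ μ lam g i c = v ↔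
      (μ i + ∑ w ∈ Icc 1 (v - 1), g i w ≤ c ∧ c < μ i + ∑ w ∈ Icc 1 v, g i w) := by
  obtain ⟨h1, h2, h3, h4⟩ := EE_self i htot hc1 hc2
  constructor
  · rintro rfl
    exact ⟨h3, h4⟩
  · rintro ⟨hb1, hb2⟩
    by_contra hne
    rcases Nat.lt_or_ge (EE ℓ μ lam g i c) v with h | h
    · have := S_mono (g i) (show EE ℓ μ lam g i c ≤ v - 1 by omega)
      omega
    · have := S_mono (g i) (show v ≤ EE ℓ μ lam g i c - 1 by omega)
      omega

theorem EE_lt_adj {n ℓ : ℕ} {μ lam : Fin n → ℕ}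
    (hμ : ∀ i j : Fin n, i ≤ j → μ j ≤ μ i)
    (hlam : ∀ i j : Fin n, i ≤ j → lam j ≤ lam i)
    (p : Prof n ℓ μ lam) (i i' : Fin n) (hadj : (i : ℕ) + 1 = (i' : ℕ))
    {c : ℕ} (hi : μ i ≤ c) (hc : c < lam i') :
    EE ℓ μ lam p.g i c < EE ℓ μ lam p.g i' c := by
  have hle : i ≤ i' := Fin.le_def.mpr (by omega)
  have hci : c < lam i := lt_of_lt_of_le hc (hlam i i' hle)
  have hμ' : μ i' ≤ μ i := hμ i i' hle
  obtain ⟨e1, e2, e3, e4⟩ := EE_self i (p.total i) hi hci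
  obtain ⟨f1, f2, f3, f4⟩ := EE_self i' (p.total i') (le_trans hμ' hi) hc
  by_contra hcon
  push_neg at hcon
  have hcs := p.cs i i' hadj _ f1 f2
  have hmono := S_mono (p.g i)
    (show EE ℓ μ lam p.g i' c - 1 ≤ EE ℓ μ lam p.g i c - 1 by omega)
  omega

theorem EE_lt {n ℓ : ℕ} {μ lam : Fin n → ℕ}
    (hμ : ∀ i j : Fin n, i ≤ j → μ j ≤ μ i)
    (hlam : ∀ i j : Fin n, i ≤ j → lam j ≤ lam i)
    (p : Prof n ℓ μ lam) :
    ∀ (m : ℕ) (i i' : Fin n), (i' : ℕ) = (i : ℕ) + m + 1 →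
      ∀ c : ℕ, μ i ≤ c → c < lam i' → EE ℓ μ lam p.g i c < EE ℓ μ lam p.g i' c := by
  intro m
  induction m with
  | zero =>
    intro i i' h c hi hc
    exact EE_lt_adj hμ hlam p i i' (by omega) hi hc
  | succ m ih =>
    intro i i' h c hi hc
    have hlt : (i : ℕ) + m + 1 < n := by
      have := i'.isLt
      omega
    set r : Fin n := ⟨(i : ℕ) + m + 1, hlt⟩ with hr
    have hrv : (r : ℕ) = (i : ℕ) + m + 1 := rfl
    have hri' : r ≤ i' := Fin.le_def.mpr (by omega)
    have hir : i ≤ r := Fin.le_def.mpr (by omega)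
    have h1 : EE ℓ μ lam p.g i c < EE ℓ μ lam p.g r c :=
      ih i r hrv c hi (lt_of_lt_of_le hc (hlam r i' hri'))
    have h2 : EE ℓ μ lam p.g r c < EE ℓ μ lam p.g i' c :=
      EE_lt_adj hμ hlam p r i' (by omega) (le_trans (hμ i r hir) hi) hc
    omega

/-- The restricted tableau associated with a profile. -/
def profToRTab {n ℓ : ℕ} {μ lam : Fin n → ℕ}
    (hμ : ∀ i j : Fin n, i ≤ j → μ j ≤ μ i)
    (hlam : ∀ i j : Fin n, i ≤ j → lam j ≤ lam i)
    (p : Prof n ℓ μ lam) : RTab n ℓ μ lam where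
  entry := EE ℓ μ lam p.g
  supp i c := by
    by_cases hc : μ i ≤ c ∧ c < lam i
    · simp only [EE, if_pos hc]
      constructor
      · intro _
        exact hc
      · intro _
        omega
    · simp only [EE, if_neg hc]
      constructor
      · intro h
        exact absurd rfl h
      · intro h
        exact absurd h hc
  le_alpha i c := by
    by_cases hc : μ i ≤ c ∧ c < lam i
    · exact (EE_self i (p.total i) hc.1 hc.2).2.1
    · simp only [EE, if_neg hc]
      exact Nat.zero_le _
  row i c c' hcc h h' := by
    have hc : μ i ≤ c ∧ c < lam i := by
      by_contra hcon
      exact h (by simp only [EE, if_neg hcon])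
    have hc' : μ i ≤ c' ∧ c' < lam i := by
      by_contra hcon
      exact h' (by simp only [EE, if_neg hcon])
    simp only [EE, if_pos hc, if_pos hc']
    have hsub2 : ((Icc 1 ℓ).filter fun v => μ i + ∑ w ∈ Icc 1 v, p.g i w ≤ c) ⊆
        ((Icc 1 ℓ).filter fun v => μ i + ∑ w ∈ Icc 1 v, p.g i w ≤ c') := by
      intro x hx
      obtain ⟨h1, h2⟩ := Finset.mem_filter.mp hx
      exact Finset.mem_filter.mpr ⟨h1, by omega⟩
    have := Finset.card_le_card hsub2
    omega
  col i i' c hii' h h' := by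
    have hc : μ i ≤ c ∧ c < lam i := by
      by_contra hcon
      exact h (by simp only [EE, if_neg hcon])
    have hc' : μ i' ≤ c ∧ c < lam i' := by
      by_contra hcon
      exact h' (by simp only [EE, if_neg hcon])
    have hlt : (i : ℕ) < (i' : ℕ) := Fin.lt_def.mp hii'
    exact EE_lt hμ hlam p ((i' : ℕ) - (i : ℕ) - 1) i i' (by omega) c hc.1 hc'.2
  restrict i c h := by
    have hc : μ i ≤ c ∧ c < lam i := by
      by_contra hcon
      exact h (by simp only [EE, if_neg hcon])
    obtain ⟨h1, h2, h3, h4⟩ := EE_self i (p.total i) hc.1 hc.2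
    have hS := S_succ (p.g i) h1
    have hgv : p.g i (EE ℓ μ lam p.g i c) ≠ 0 := by omega
    have hg := p.gsupp i _ hgv
    rw [lt_colHt_iff hμ]
    omega
/-- The profile extracted from a restricted tableau. -/
def gR {n ℓ : ℕ} {μ lam : Fin n → ℕ} (R : RTab n ℓ μ lam) (i : Fin n) (v : ℕ) : ℕ :=
  ((Ico (μ i) (lam i)).filter fun c => R.entry i c = v).card

theorem gR_supp {n ℓ : ℕ} {μ lam : Fin n → ℕ}
    (hμ : ∀ i j : Fin n, i ≤ j → μ j ≤ μ i) (R : RTab n ℓ μ lam)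
    (i : Fin n) (v : ℕ) (h : gR R i v ≠ 0) : ℓ - μ i < v ∧ v ≤ ℓ := by
  obtain ⟨c, hcmem⟩ := Finset.card_ne_zero.mp h
  obtain ⟨hcI, hcv⟩ := Finset.mem_filter.mp hcmem
  rw [Finset.mem_Ico] at hcI
  have hnz : R.entry i c ≠ 0 := (R.supp i c).mpr ⟨hcI.1, hcI.2⟩
  have hres := R.restrict i c hnz
  rw [hcv] at hres
  have hcol := (lt_colHt_iff hμ i v).mp hres
  have hal := R.le_alpha i c
  rw [hcv] at hal
  omega

theorem filter_le_card {n ℓ : ℕ} {μ lam : Fin n → ℕ} (R : RTab n ℓ μ lam)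
    (i : Fin n) (w : ℕ) :
    ((Ico (μ i) (lam i)).filter fun c => R.entry i c ≤ w).card =
      ∑ v ∈ Icc 1 w, gR R i v := by
  refine Eq.trans (Finset.card_eq_sum_card_fiberwise
    (f := fun c => R.entry i c) (t := Icc 1 w) fun c hc => ?_)
    (Finset.sum_congr rfl fun v hv => ?_)
  · obtain ⟨hcI, hcw⟩ := Finset.mem_filter.mp hc
    rw [Finset.mem_Ico] at hcI
    have hne : R.entry i c ≠ 0 := (R.supp i c).mpr ⟨hcI.1, hcI.2⟩
    have hcw' : R.entry i c ≤ w := hcw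
    rw [Finset.mem_coe, Finset.mem_Icc]
    show 1 ≤ R.entry i c ∧ R.entry i c ≤ w
    omega
  · rw [Finset.mem_Icc] at hv
    rw [gR, Finset.filter_filter]
    congr 1
    apply Finset.filter_congr
    intro c _
    show (R.entry i c ≤ w ∧ R.entry i c = v) ↔ R.entry i c = v
    constructor
    · exact fun hx => hx.2
    · intro hx
      exact ⟨by omega, hx⟩

theorem filter_le_eq {n ℓ : ℕ} {μ lam : Fin n → ℕ} (R : RTab n ℓ μ lam)
    (i : Fin n) (w : ℕ) :
    (Ico (μ i) (lam i)).filter (fun c => R.entry i c ≤ w) =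
      Ico (μ i) (μ i + ∑ v ∈ Icc 1 w, gR R i v) := by
  rw [← filter_le_card]
  apply downset_eq (b := lam i)
  · exact Finset.filter_subset _ _
  · intro c hc c' h1 h2
    obtain ⟨hcI, hcw⟩ := Finset.mem_filter.mp hc
    rw [Finset.mem_Ico] at hcI
    have hc'I : c' ∈ Ico (μ i) (lam i) := Finset.mem_Ico.mpr ⟨h1, by omega⟩
    refine Finset.mem_filter.mpr ⟨hc'I, ?_⟩
    have hnz : R.entry i c' ≠ 0 := (R.supp i c').mpr ⟨h1, by omega⟩
    have hnz2 : R.entry i c ≠ 0 := (R.supp i c).mpr ⟨hcI.1, hcI.2⟩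
    exact le_trans (R.row i c' c h2 hnz hnz2) hcw

theorem gR_total {n ℓ : ℕ} {μ lam : Fin n → ℕ} (hsub : ∀ i, μ i ≤ lam i)
    (R : RTab n ℓ μ lam) (i : Fin n) :
    μ i + ∑ v ∈ Icc 1 ℓ, gR R i v = lam i := by
  rw [← filter_le_card]
  have heq : (Ico (μ i) (lam i)).filter (fun c => R.entry i c ≤ ℓ) =
      Ico (μ i) (lam i) :=
    Finset.filter_true_of_mem fun c _ => R.le_alpha i c
  rw [heq, Nat.card_Ico]
  have := hsub i
  omega

theorem gR_cs {n ℓ : ℕ} {μ lam : Fin n → ℕ}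
    (hμ : ∀ i j : Fin n, i ≤ j → μ j ≤ μ i)
    (hlam : ∀ i j : Fin n, i ≤ j → lam j ≤ lam i)
    (R : RTab n ℓ μ lam) :
    ∀ (i i' : Fin n), (i : ℕ) + 1 = (i' : ℕ) → ∀ k, 1 ≤ k → k ≤ ℓ →
      μ i' + ∑ v ∈ Icc 1 k, gR R i' v ≤ μ i + ∑ v ∈ Icc 1 (k - 1), gR R i v := by
  intro i i' hadj k hk1 hk
  have hle : i ≤ i' := Fin.le_def.mpr (by omega)
  have hμ' : μ i' ≤ μ i := hμ i i' hle
  rcases Nat.eq_zero_or_pos (∑ v ∈ Icc 1 k, gR R i' v) with h0 | hpos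
  · omega
  · set c := μ i' + ∑ v ∈ Icc 1 k, gR R i' v - 1 with hc
    have hcmem : c ∈ (Ico (μ i') (lam i')).filter fun x => R.entry i' x ≤ k := by
      rw [filter_le_eq, Finset.mem_Ico]
      omega
    obtain ⟨hcI, hck⟩ := Finset.mem_filter.mp hcmem
    rw [Finset.mem_Ico] at hcI
    rcases Nat.lt_or_ge c (μ i) with hlow | hhigh
    · omega
    · have hcl : c < lam i := lt_of_lt_of_le hcI.2 (hlam i i' hle)
      have hnz : R.entry i c ≠ 0 := (R.supp i c).mpr ⟨hhigh, hcl⟩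
      have hnz' : R.entry i' c ≠ 0 := (R.supp i' c).mpr ⟨hcI.1, hcI.2⟩
      have hcol := R.col i i' c (Fin.lt_def.mpr (by omega)) hnz hnz'
      have hcmem2 : c ∈ (Ico (μ i) (lam i)).filter fun x => R.entry i x ≤ k - 1 :=
        Finset.mem_filter.mpr ⟨Finset.mem_Ico.mpr ⟨hhigh, hcl⟩, by omega⟩
      rw [filter_le_eq, Finset.mem_Ico] at hcmem2
      omega

theorem wt_eq_gR {n ℓ : ℕ} {μ lam : Fin n → ℕ} (R : RTab n ℓ μ lam)
    (v : ℕ) (hv : 1 ≤ v) : R.wt v = ∑ i : Fin n, gR R i v := by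
  rw [RTab.wt]
  refine Finset.sum_congr rfl fun i _ => ?_
  rw [gR]
  congr 1
  ext c
  simp only [Finset.mem_filter, Finset.mem_range, Finset.mem_Ico]
  constructor
  · rintro ⟨hc, he⟩
    have hnz : R.entry i c ≠ 0 := by omega
    have := (R.supp i c).mp hnz
    exact ⟨this, he⟩
  · rintro ⟨hc, he⟩
    exact ⟨hc.2, he⟩

theorem EE_gR {n ℓ : ℕ} {μ lam : Fin n → ℕ} (hsub : ∀ i, μ i ≤ lam i)
    (R : RTab n ℓ μ lam) (i : Fin n) (c : ℕ) :
    EE ℓ μ lam (gR R) i c = R.entry i c := by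
  by_cases hc : μ i ≤ c ∧ c < lam i
  · have hnz : R.entry i c ≠ 0 := (R.supp i c).mpr hc
    have hvl : R.entry i c ≤ ℓ := R.le_alpha i c
    refine (EE_eq_iff i (gR_total hsub R i) hc.1 hc.2 (R.entry i c)
      (by omega) hvl).mpr ⟨?_, ?_⟩
    · by_contra hcon
      push_neg at hcon
      have hm : c ∈ Ico (μ i) (μ i + ∑ w ∈ Icc 1 (R.entry i c - 1), gR R i w) :=
        Finset.mem_Ico.mpr ⟨hc.1, hcon⟩
      rw [← filter_le_eq] at hm
      have := (Finset.mem_filter.mp hm).2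
      omega
    · have hm : c ∈ (Ico (μ i) (lam i)).filter fun x => R.entry i x ≤ R.entry i c :=
        Finset.mem_filter.mpr ⟨Finset.mem_Ico.mpr hc, le_rfl⟩
      rw [filter_le_eq] at hm
      exact (Finset.mem_Ico.mp hm).2
  · simp only [EE, if_neg hc]
    rcases Nat.eq_zero_or_pos (R.entry i c) with h0 | hpos
    · omega
    · exact absurd ((R.supp i c).mp (by omega)) hc

theorem gR_EE {n ℓ : ℕ} {μ lam : Fin n → ℕ}
    (hμ : ∀ i j : Fin n, i ≤ j → μ j ≤ μ i)
    (hlam : ∀ i j : Fin n, i ≤ j → lam j ≤ lam i)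
    (p : Prof n ℓ μ lam) (i : Fin n) (v : ℕ) :
    gR (profToRTab hμ hlam p) i v = p.g i v := by
  by_cases hv : 1 ≤ v ∧ v ≤ ℓ
  · have hfil : (Ico (μ i) (lam i)).filter (fun c => EE ℓ μ lam p.g i c = v) =
        Ico (μ i + ∑ w ∈ Icc 1 (v - 1), p.g i w) (μ i + ∑ w ∈ Icc 1 v, p.g i w) := by
      ext c
      simp only [Finset.mem_filter, Finset.mem_Ico]
      constructor
      · rintro ⟨⟨h1, h2⟩, he⟩
        exact (EE_eq_iff i (p.total i) h1 h2 v hv.1 hv.2).mp he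
      · rintro ⟨h1, h2⟩
        have hc1 : μ i ≤ c := le_trans (Nat.le_add_right _ _) h1
        have hc2 : c < lam i := lt_of_lt_of_le h2
          (by rw [← p.total i]; exact Nat.add_le_add_left (S_mono (p.g i) hv.2) _)
        exact ⟨⟨hc1, hc2⟩, (EE_eq_iff i (p.total i) hc1 hc2 v hv.1 hv.2).mpr ⟨h1, h2⟩⟩
    show ((Ico (μ i) (lam i)).filter fun c => EE ℓ μ lam p.g i c = v).card = p.g i v
    rw [hfil, Nat.card_Ico]
    have hs := S_succ (p.g i) hv.1
    omega
  · have h0 : p.g i v = 0 := by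
      by_contra h
      have := p.gsupp i v h
      omega
    rw [h0]
    show ((Ico (μ i) (lam i)).filter fun c => EE ℓ μ lam p.g i c = v).card = 0
    rw [Finset.card_eq_zero]
    apply Finset.filter_false_of_mem
    intro c hcI
    rw [Finset.mem_Ico] at hcI
    obtain ⟨e1, e2, _, _⟩ := EE_self i (p.total i) hcI.1 hcI.2
    intro he
    rw [he] at e1 e2
    omega

theorem sideR {n ℓ : ℕ} (hn : 0 < n) (μ lam : Fin n → ℕ)
    (hμ : ∀ i j : Fin n, i ≤ j → μ j ≤ μ i) (hl : ℓ = μ ⟨0, hn⟩)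
    (hlam : ∀ i j : Fin n, i ≤ j → lam j ≤ lam i) (hsub : ∀ i, μ i ≤ lam i)
    (T : ℕ → ℕ) :
    Nonempty
      ({R : RTab n ℓ μ lam // ∀ v, 1 ≤ v → v ≤ ℓ → R.wt v = T v} ≃
        {p : Prof n ℓ μ lam // ∀ v, 1 ≤ v → v ≤ ℓ → (∑ i : Fin n, p.g i v) = T v}) := by
  constructor
  refine
    { toFun := fun X => ?_
      invFun := fun Y => ?_
      left_inv := ?_
      right_inv := ?_ }
  · obtain ⟨R, hw⟩ := X
    refine ⟨⟨gR R, gR_supp hμ R, gR_total hsub R, gR_cs hμ hlam R⟩, ?_⟩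
    intro v h1 h2
    rw [← wt_eq_gR R v h1]
    exact hw v h1 h2
  · obtain ⟨p, hT⟩ := Y
    refine ⟨profToRTab hμ hlam p, ?_⟩
    intro v h1 h2
    rw [wt_eq_gR _ v h1,
      Finset.sum_congr rfl fun i _ => gR_EE hμ hlam p i v]
    exact hT v h1 h2
  · rintro ⟨R, hw⟩
    apply Subtype.ext
    apply RTab.ext'
    funext i c
    show EE ℓ μ lam (gR R) i c = R.entry i c
    exact EE_gR hsub R i c
  · rintro ⟨p, hT⟩
    apply Subtype.ext
    apply Prof.ext'
    funext i v
    show gR (profToRTab hμ hlam p) i v = p.g i v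
    exact gR_EE hμ hlam p i v
end Stmt7Aux

/-- for a partition `μ` with `n` parts and largest part `ℓ`, a
partition `λ ⊇ μ`, and `T = (T_1, …, T_ℓ)`, there is a bijection between maximal
multiset tableaux of shape `μ` with weight `λ` and column weight `T`, and
restricted tableaux of shape `λ/μ` with weight `T`. -/
theorem stmt7 (n ℓ : ℕ) (hn : 0 < n) (μ lam : Fin n → ℕ)
    (hμ : ∀ i j : Fin n, i ≤ j → μ j ≤ μ i) (hl : ℓ = μ ⟨0, hn⟩)
    (hlam : ∀ i j : Fin n, i ≤ j → lam j ≤ lam i) (hsub : ∀ i, μ i ≤ lam i)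
    (T : ℕ → ℕ) :
    Nonempty
      ({P : MTab n ℓ μ // P.IsMax ∧ (∀ i : Fin n, P.wt ((i : ℕ) + 1) = lam i) ∧
          (∀ j, 1 ≤ j → j ≤ ℓ → P.cw j = T j)} ≃
        {R : RTab n ℓ μ lam // ∀ v, 1 ≤ v → v ≤ ℓ → R.wt v = T v}) := by
  obtain ⟨e1⟩ := Stmt7Aux.sideP hn μ lam hμ hl hlam hsub T
  obtain ⟨e2⟩ := Stmt7Aux.sideR hn μ lam hμ hl hlam hsub T
  exact ⟨e1.trans e2.symm⟩
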